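/- If (H, X) is a stable arrangement of oriented hyperplanes in ℝ^d (X open convex, and every nonempty intersection H_σ ∩ X of hyperplanes indexed by σ has dimension d − |σ|), then every nonempty atom A_σ of the cover {H_i⁺ ∩ X} has nonempty interior. -/

import Mathlib

open scoped RealInnerProductSpace

/-- The atom `A_σ` of the arrangement of half-spaces `H_i⁺ = {x | w_i·x > h_i}`
relative to `X`: points of `X` lying in `H_i⁺` exactly for `i ∈ σ`. -/
def atom {n d : ℕ} (w : Fin n → EuclideanSpace ℝ (Fin d)) (h : Fin n → ℝ)
    (X : Set (EuclideanSpace ℝ (Fin d))) (σ : Finset (Fin n)) :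
    Set (EuclideanSpace ℝ (Fin d)) :=
  {x ∈ X | ∀ i, i ∈ σ ↔ h i < ⟪w i, x⟫}

/-- A stable arrangement: `X` open and convex, all normals nonzero, and every
collection of hyperplanes meeting `X` has linearly independent normals
(equivalently, the intersection has dimension `d - |σ|`). -/
def StableArr {n d : ℕ} (w : Fin n → EuclideanSpace ℝ (Fin d)) (h : Fin n → ℝ)
    (X : Set (EuclideanSpace ℝ (Fin d))) : Prop :=
  IsOpen X ∧ Convex ℝ X ∧ (∀ i, w i ≠ 0) ∧
    ∀ σ : Finset (Fin n),
      (X ∩ ⋂ i ∈ σ, {x | ⟪w i, x⟫ = h i}).Nonempty →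
        LinearIndependent ℝ (fun i : σ => w i.1)

/-- From a linearly independent family indexed by a finset, one can find a
vector whose inner product with each member is `-1`. -/
lemma exists_inner_eq_neg_one {n d : ℕ} (w : Fin n → EuclideanSpace ℝ (Fin d))
    (τ : Finset (Fin n)) (hli : LinearIndependent ℝ (fun i : τ => w i.1)) :
    ∃ v : EuclideanSpace ℝ (Fin d), ∀ j ∈ τ, ⟪w j, v⟫ = -1 := by
  classical
  have H : ∀ j : Fin n, ∃ u : EuclideanSpace ℝ (Fin d), j ∈ τ →
      ⟪w j, u⟫ = 1 ∧ ∀ k ∈ τ, k ≠ j → ⟪w k, u⟫ = 0 := by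
    intro j
    by_cases hj : j ∈ τ
    · set K : Submodule ℝ (EuclideanSpace ℝ (Fin d)) :=
        Submodule.span ℝ (w '' (τ.erase j)) with hK
      have hnot : w j ∉ K := by
        have h1 : (⟨j, hj⟩ : τ) ∉ {k : τ | (k : Fin n) ≠ j} := by simp
        have h2 := hli.notMem_span_image (s := {k : τ | (k : Fin n) ≠ j}) h1
        have himg : (fun i : τ => w i.1) '' {k : τ | (k : Fin n) ≠ j}
            = w '' (τ.erase j) := by
          ext z
          constructor
          · rintro ⟨k, hk, rfl⟩
            exact ⟨k.1, Finset.mem_erase.mpr ⟨hk, k.2⟩, rfl⟩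
          · rintro ⟨k, hk, rfl⟩
            simp only [Finset.coe_erase, Set.mem_diff, Set.mem_singleton_iff,
              Finset.mem_coe] at hk
            exact ⟨⟨k, hk.1⟩, by simpa using hk.2, rfl⟩
        rw [himg] at h2
        exact h2
      set p : EuclideanSpace ℝ (Fin d) := ↑(K.orthogonalProjectionOnto (w j)) with hp'
      have hpK : p ∈ K := (K.orthogonalProjectionOnto (w j)).2
      set u : EuclideanSpace ℝ (Fin d) := w j - p with hu
      have huK : u ∈ Kᗮ := Submodule.sub_starProjection_mem_orthogonal (K := K) (w j)
      have hune : u ≠ 0 := by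
        intro h0
        apply hnot
        have : w j = p := sub_eq_zero.mp h0
        rw [this]; exact hpK
      have hinner : ⟪w j, u⟫ = ‖u‖ ^ 2 := by
        have hp : ⟪p, u⟫ = 0 := huK p hpK
        have : ⟪w j, u⟫ = ⟪u, u⟫ + ⟪p, u⟫ := by
          rw [← inner_add_left]
          congr 1
          rw [hu]; abel
        rw [this, hp, real_inner_self_eq_norm_sq]; ring
      refine ⟨(‖u‖ ^ 2)⁻¹ • u, fun _ => ⟨?_, fun k hk hkj => ?_⟩⟩
      · rw [real_inner_smul_right, hinner]
        field_simp [hune]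
      · have hkK : w k ∈ K := Submodule.subset_span ⟨k, by simp [Finset.mem_erase, hkj, hk], rfl⟩
        rw [real_inner_smul_right, huK (w k) hkK, mul_zero]
    · exact ⟨0, fun h => absurd h hj⟩
  choose g hg using H
  refine ⟨-∑ j ∈ τ, g j, fun k hk => ?_⟩
  rw [inner_neg_right, inner_sum]
  rw [Finset.sum_eq_single k (fun j hj hjk => (hg j hj).2 k hk (Ne.symm hjk))
    (fun hk' => absurd hk hk'), (hg k hk).1]

/-- In a stable arrangement, every nonempty atom has nonempty interior. -/
theorem atom_interior_nonempty {n d : ℕ} (w : Fin n → EuclideanSpace ℝ (Fin d))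
    (h : Fin n → ℝ) (X : Set (EuclideanSpace ℝ (Fin d)))
    (hst : StableArr w h X) (σ : Finset (Fin n)) (hne : (atom w h X σ).Nonempty) :
    (interior (atom w h X σ)).Nonempty := by
  classical
  obtain ⟨x, hxX, hx⟩ := hne
  obtain ⟨hXopen, -, -, hstab⟩ := hst
  set τ : Finset (Fin n) := Finset.univ.filter (fun j => j ∉ σ ∧ ⟪w j, x⟫ = h j) with hτ
  have hint : (X ∩ ⋂ i ∈ τ, {y | ⟪w i, y⟫ = h i}).Nonempty := by
    refine ⟨x, hxX, ?_⟩
    simp only [Set.mem_iInter, Set.mem_setOf_eq]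
    intro i hi
    simp only [hτ, Finset.mem_filter] at hi
    exact hi.2.2
  obtain ⟨v, hv⟩ := exists_inner_eq_neg_one w τ (hstab τ hint)
  -- the open set B of "fully strict" points
  set B : Set (EuclideanSpace ℝ (Fin d)) :=
    {y | y ∈ X ∧ ∀ i, if i ∈ σ then h i < ⟪w i, y⟫ else ⟪w i, y⟫ < h i} with hB
  have hBopen : IsOpen B := by
    have : B = X ∩ ⋂ i, {y | if i ∈ σ then h i < ⟪w i, y⟫ else ⟪w i, y⟫ < h i} := by
      ext y; simp [hB, Set.mem_iInter]
    rw [this]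
    refine hXopen.inter (isOpen_iInter_of_finite fun i => ?_)
    by_cases hi : i ∈ σ <;> simp only [hi, if_true, if_false]
    · exact isOpen_lt continuous_const (continuous_const.inner continuous_id)
    · exact isOpen_lt (continuous_const.inner continuous_id) continuous_const
  have hBsub : B ⊆ atom w h X σ := by
    rintro y ⟨hyX, hy⟩
    refine ⟨hyX, fun i => ?_⟩
    have := hy i
    by_cases hi : i ∈ σ
    · simp only [hi, if_true] at this
      exact ⟨fun _ => this, fun _ => hi⟩
    · simp only [hi, if_false] at this
      exact ⟨fun h' => absurd h' hi, fun h' => absurd h' (not_lt.mpr this.le)⟩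
  -- find a point of B near x
  have hcont : Continuous fun t : ℝ => x + t • v := by continuity
  have h0 : (fun t : ℝ => x + t • v) 0 = x := by simp
  have hev : ∀ᶠ t in nhdsWithin (0:ℝ) (Set.Ioi 0), x + t • v ∈ B := by
    have hevX : ∀ᶠ t in nhdsWithin (0:ℝ) (Set.Ioi 0), x + t • v ∈ X := by
      refine Filter.Eventually.filter_mono nhdsWithin_le_nhds ?_
      have := (hcont.tendsto 0).eventually (hXopen.eventually_mem (show (fun t : ℝ => x + t • v) 0 ∈ X by simpa using hxX))
      simpa using this
    have hevI : ∀ i : Fin n, ∀ᶠ t in nhdsWithin (0:ℝ) (Set.Ioi 0),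
        if i ∈ σ then h i < ⟪w i, x + t • v⟫ else ⟪w i, x + t • v⟫ < h i := by
      intro i
      by_cases hi : i ∈ σ
      · simp only [hi, if_true]
        refine Filter.Eventually.filter_mono nhdsWithin_le_nhds ?_
        have hop : IsOpen {y : EuclideanSpace ℝ (Fin d) | h i < ⟪w i, y⟫} :=
          isOpen_lt continuous_const (continuous_const.inner continuous_id)
        have hxm : x ∈ {y : EuclideanSpace ℝ (Fin d) | h i < ⟪w i, y⟫} := (hx i).mp hi
        have := (hcont.tendsto 0).eventually (hop.eventually_mem (show (fun t : ℝ => x + t • v) 0 ∈ _ by simpa using hxm))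
        simpa using this
      · simp only [hi, if_false]
        by_cases hiτ : i ∈ τ
        · refine Filter.eventually_of_mem self_mem_nhdsWithin (fun t ht => ?_)
          have heq : ⟪w i, x + t • v⟫ = h i + t * (-1) := by
            rw [inner_add_right, real_inner_smul_right, hv i hiτ]
            have : ⟪w i, x⟫ = h i := by
              simp only [hτ, Finset.mem_filter] at hiτ; exact hiτ.2.2
            rw [this]
          rw [heq]
          have : (0:ℝ) < t := ht
          linarith
        · have hlt : ⟪w i, x⟫ < h i := by
            have hle : ¬ h i < ⟪w i, x⟫ := fun h' => hi ((hx i).mpr h')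
            have hne : ⟪w i, x⟫ ≠ h i := by
              intro h'
              exact hiτ (Finset.mem_filter.mpr ⟨Finset.mem_univ i, hi, h'⟩)
            exact lt_of_le_of_ne (not_lt.mp hle) hne
          refine Filter.Eventually.filter_mono nhdsWithin_le_nhds ?_
          have hop : IsOpen {y : EuclideanSpace ℝ (Fin d) | ⟪w i, y⟫ < h i} :=
            isOpen_lt (continuous_const.inner continuous_id) continuous_const
          have := (hcont.tendsto 0).eventually (hop.eventually_mem (show (fun t : ℝ => x + t • v) 0 ∈ {y : EuclideanSpace ℝ (Fin d) | ⟪w i, y⟫ < h i} by simpa using hlt))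
          simpa using this
    have hall := (Filter.eventually_all).mpr hevI
    filter_upwards [hevX, hall] with t h1 h2
    exact ⟨h1, h2⟩
  obtain ⟨t, htB⟩ := hev.exists
  exact ⟨x + t • v, interior_maximal hBsub hBopen htB⟩
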